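/- Let p be a prime, 1 ≤ k ≤ p−1 with (k+1)(k+2) ≥ p, and A = (a_i)_{i≥0} the sequence over F_p with a_i = binom(i+k, k) mod p. Then ⌈p/(k+2)⌉ ≤ E_p(A) ≤ max{⌈p/(k+2)⌉, (k+1)·{p/(k+1)}}, where {x} denotes the fractional part of x. -/

import Mathlib

/-- The `N`-th linear complexity of a sequence `s` over a field: the length of a
shortest linear recurrence satisfied by the first `N` terms. -/
noncomputable def linComplexityN {F : Type*} [Field F] (s : ℕ → F) (N : ℕ) : ℕ :=
  sInf {L | ∃ c : Fin L → F, ∀ i, i + L < N →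
    s (i + L) + ∑ ℓ : Fin L, c ℓ * s (i + ℓ.1) = 0}

open Classical in
/-- The `N`-th expansion complexity of a sequence `s` over a field: `0` if the first
`N` terms vanish, otherwise the least total degree of a nonzero bivariate polynomial
`h(x,y)` with `h(x, G(x)) ≡ 0 mod x^N`, where `G` is the generating function of `s`. -/
noncomputable def expComplexityN {F : Type*} [Field F] (s : ℕ → F) (N : ℕ) : ℕ :=
  if ∀ i < N, s i = 0 then 0 else
  sInf {d | ∃ h : MvPolynomial (Fin 2) F, h ≠ 0 ∧ h.totalDegree = d ∧
    (PowerSeries.X : PowerSeries F) ^ N ∣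
      MvPolynomial.aeval ![(PowerSeries.X : PowerSeries F), PowerSeries.mk s] h}

/-- Auxiliary polynomial: clearing denominators in `h(x, (1-x)^{-(k+1)})`. -/
noncomputable def clearPoly {F : Type*} [Field F] (k d : ℕ)
    (h : MvPolynomial (Fin 2) F) : Polynomial F :=
  ∑ m ∈ h.support, Polynomial.C (MvPolynomial.coeff m h) * Polynomial.X ^ (m 0) *
    ((1 - Polynomial.X) ^ (k + 1)) ^ (d - m 1)

lemma clearPoly_spec {F : Type*} [Field F] (k d : ℕ) (G : PowerSeries F)
    (hG : (1 - PowerSeries.X) ^ (k + 1) * G = 1) (h : MvPolynomial (Fin 2) F)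
    (hd : ∀ m ∈ h.support, m 1 ≤ d) :
    ((1 - PowerSeries.X : PowerSeries F) ^ (k + 1)) ^ d *
      MvPolynomial.aeval ![PowerSeries.X, G] h = (clearPoly k d h : PowerSeries F) := by
  have hco : ((clearPoly k d h : Polynomial F) : PowerSeries F) =
      ∑ m ∈ h.support, PowerSeries.C (MvPolynomial.coeff m h) * PowerSeries.X ^ (m 0) *
        ((1 - PowerSeries.X) ^ (k + 1)) ^ (d - m 1) := by
    rw [clearPoly, ← Polynomial.coeToPowerSeries.ringHom_apply, map_sum]
    refine Finset.sum_congr rfl fun m _ => ?_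
    simp
  rw [hco]
  conv_lhs => rw [MvPolynomial.as_sum h]
  rw [map_sum, Finset.mul_sum]
  refine Finset.sum_congr rfl fun m hm => ?_
  rw [MvPolynomial.aeval_monomial, Finsupp.prod_fintype _ _ (fun i => pow_zero _),
    Fin.prod_univ_two, Matrix.cons_val_zero, Matrix.cons_val_one, Matrix.cons_val_zero]
  have hm1 : m 1 ≤ d := hd m hm
  have hA : (((1 - PowerSeries.X) ^ (k + 1) : PowerSeries F)) ^ d =
      ((1 - PowerSeries.X) ^ (k + 1)) ^ (d - m 1) * ((1 - PowerSeries.X) ^ (k + 1)) ^ (m 1) := by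
    rw [← pow_add, Nat.sub_add_cancel hm1]
  rw [hA, ← PowerSeries.C_eq_algebraMap]
  have hone : (((1 - PowerSeries.X) ^ (k + 1) : PowerSeries F)) ^ (m 1) * G ^ (m 1) = 1 := by
    rw [← mul_pow, hG, one_pow]
  calc ((1 - PowerSeries.X) ^ (k + 1) : PowerSeries F) ^ (d - m 1) *
        ((1 - PowerSeries.X) ^ (k + 1)) ^ (m 1) *
        (PowerSeries.C (MvPolynomial.coeff m h) * (PowerSeries.X ^ (m 0) * G ^ (m 1)))
      = PowerSeries.C (MvPolynomial.coeff m h) * PowerSeries.X ^ (m 0) *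
          ((1 - PowerSeries.X) ^ (k + 1)) ^ (d - m 1) *
          (((1 - PowerSeries.X) ^ (k + 1)) ^ (m 1) * G ^ (m 1)) := by ring
    _ = _ := by rw [hone, mul_one]

lemma clearPoly_ne_zero {F : Type*} [Field F] (k d : ℕ) (h : MvPolynomial (Fin 2) F)
    (h0 : h ≠ 0) (hdeg : ∀ m ∈ h.support, m 0 + m 1 ≤ d) (hdk : d ≤ k) :
    clearPoly k d h ≠ 0 := by
  intro hP
  obtain ⟨m₀, hm₀, hmax⟩ := Finset.exists_max_image h.support
    (fun m => (k + 2) * m 1 + m 0) (MvPolynomial.support_nonempty.mpr h0)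
  have hm₀d := hdeg m₀ hm₀
  have hns : (1 - Polynomial.X : Polynomial F).natDegree = 1 := by
    have he : (1 - Polynomial.X : Polynomial F) = -(Polynomial.X - Polynomial.C 1) := by rw [Polynomial.C_1]; ring
    rw [he, Polynomial.natDegree_neg, Polynomial.natDegree_X_sub_C]
  have hlc : (1 - Polynomial.X : Polynomial F).leadingCoeff = -1 := by
    have he : (1 - Polynomial.X : Polynomial F) = -(Polynomial.X - Polynomial.C 1) := by rw [Polynomial.C_1]; ring
    rw [he, Polynomial.leadingCoeff_neg, Polynomial.leadingCoeff_X_sub_C]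
  have hQ' : ∑ m ∈ h.support, Polynomial.C (MvPolynomial.coeff m h) *
      (1 - Polynomial.X) ^ (m 0) * Polynomial.X ^ ((k + 1) * (d - m 1)) = (0 : Polynomial F) := by
    have hQ : (Polynomial.aeval (1 - Polynomial.X : Polynomial F)) (clearPoly k d h) = 0 := by
      rw [hP, map_zero]
    rw [clearPoly, map_sum] at hQ
    rw [← hQ]
    refine Finset.sum_congr rfl fun m _ => ?_
    simp only [map_mul, map_pow, map_sub, map_one, Polynomial.aeval_X, Polynomial.aeval_C,
      sub_sub_cancel, Polynomial.algebraMap_eq, pow_mul]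
  have hco := congrArg (fun q : Polynomial F => q.coeff ((k + 1) * (d - m₀ 1) + m₀ 0)) hQ'
  simp only [Polynomial.finset_sum_coeff, Polynomial.coeff_zero] at hco
  rw [Finset.sum_eq_single_of_mem m₀ hm₀ ?side] at hco
  case side =>
    intro m hm hne
    have hmd := hdeg m hm
    have hkey := hmax m hm
    have h1le : m 1 ≤ m₀ 1 := by
      by_contra hlt
      push_neg at hlt
      have h2 : (k + 2) * (m₀ 1 + 1) ≤ (k + 2) * m 1 := Nat.mul_le_mul_left _ hlt
      rw [Nat.mul_add, Nat.mul_one] at h2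
      linarith
    rcases lt_or_eq_of_le h1le with hlt | heq
    · have hE : (k + 1) * (d - m₀ 1) + m₀ 0 < (k + 1) * (d - m 1) := by
        have h2 : (d - m₀ 1) + 1 ≤ d - m 1 := by omega
        have h3 : (k + 1) * ((d - m₀ 1) + 1) ≤ (k + 1) * (d - m 1) := Nat.mul_le_mul_left _ h2
        rw [Nat.mul_add, Nat.mul_one] at h3
        have h4 : m₀ 0 ≤ k := by omega
        linarith
      rw [Polynomial.coeff_mul_X_pow', if_neg (not_le.mpr hE)]
    · have h0lt : m 0 < m₀ 0 := by
        rw [heq] at hkey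
        have hle0 : m 0 ≤ m₀ 0 := Nat.le_of_add_le_add_left hkey
        refine lt_of_le_of_ne hle0 fun heq0 => hne ?_
        apply Finsupp.ext
        intro i
        fin_cases i
        · exact heq0
        · exact heq
      rw [heq, Polynomial.coeff_mul_X_pow', if_pos (Nat.le_add_right _ _),
        Nat.add_sub_cancel_left, Polynomial.coeff_C_mul]
      have hnd : ((1 - Polynomial.X : Polynomial F) ^ (m 0)).natDegree = m 0 := by
        rw [Polynomial.natDegree_pow, hns, mul_one]
      rw [Polynomial.coeff_eq_zero_of_natDegree_lt (by rw [hnd]; exact h0lt), mul_zero]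
  · rw [Polynomial.coeff_mul_X_pow', if_pos (Nat.le_add_right _ _),
      Nat.add_sub_cancel_left, Polynomial.coeff_C_mul] at hco
    have key : ∀ a : ℕ, ((1 - Polynomial.X : Polynomial F) ^ a).coeff a = (-1) ^ a := by
      intro a
      have h1 : ((1 - Polynomial.X : Polynomial F) ^ a).natDegree = a := by
        rw [Polynomial.natDegree_pow, hns, mul_one]
      have h2 := Polynomial.coeff_natDegree (p := (1 - Polynomial.X : Polynomial F) ^ a)
      rw [h1] at h2
      rw [h2, Polynomial.leadingCoeff_pow, hlc]
    rw [key] at hco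
    rcases mul_eq_zero.mp hco with hc | hc
    · exact (MvPolynomial.mem_support_iff.mp hm₀) hc
    · exact pow_ne_zero _ (neg_ne_zero.mpr one_ne_zero) hc

theorem expComplexityN_binomial_sequence_large_k (p k : ℕ) [Fact p.Prime]
    (hk1 : 1 ≤ k) (hk2 : k ≤ p - 1) (hkp : p ≤ (k + 1) * (k + 2)) :
    p ⌈/⌉ (k + 2) ≤ expComplexityN (fun i => (((i + k).choose k : ℕ) : ZMod p)) p ∧
    expComplexityN (fun i => (((i + k).choose k : ℕ) : ZMod p)) p ≤ max (p ⌈/⌉ (k + 2)) (p % (k + 1)) := by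
  have hp : p.Prime := Fact.out
  have hp2 : 2 ≤ p := hp.two_le
  have hkp' : k + 1 ≤ p := by omega
  set s : ℕ → ZMod p := fun i => (((i + k).choose k : ℕ) : ZMod p) with hs
  -- generating function identity
  have hGeq : PowerSeries.mk s = (PowerSeries.invOneSubPow (ZMod p) (k + 1)).val := by
    rw [PowerSeries.invOneSubPow_val_succ_eq_mk_add_choose]
    ext n
    simp only [PowerSeries.coeff_mk, hs]
    rw [Nat.add_comm]
  have hG : (1 - PowerSeries.X) ^ (k + 1) * PowerSeries.mk s = 1 := by
    rw [hGeq, ← PowerSeries.invOneSubPow_inv_eq_one_sub_pow]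
    exact (PowerSeries.invOneSubPow (ZMod p) (k + 1)).inv_val
  have huA : IsUnit ((1 - PowerSeries.X : PowerSeries (ZMod p)) ^ (k + 1)) :=
    IsUnit.of_mul_eq_one _ hG
  -- the guard of expComplexityN is false
  have hguard : ¬ ∀ i < p, s i = 0 := by
    intro hall
    have h0 := hall 0 (by omega)
    rw [hs] at h0
    simp only [Nat.zero_add, Nat.choose_self, Nat.cast_one] at h0
    exact one_ne_zero h0
  -- upper bound witness
  set q : ℕ := p / (k + 1) with hq
  set r : ℕ := p % (k + 1) with hr
  have hq1 : 1 ≤ q := (Nat.one_le_div_iff (by omega)).mpr hkp'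
  have hdm : (k + 1) * q + r = p := Nat.div_add_mod p (k + 1)
  have hqk : q ≤ k + 1 := by
    by_contra hcon
    push_neg at hcon
    have h1 : q * (k + 1) ≤ p := Nat.div_mul_le_self p (k + 1)
    have h2 : (k + 2) * (k + 1) ≤ q * (k + 1) := Nat.mul_le_mul_right _ hcon
    have h3 : p = (k + 1) * (k + 2) := le_antisymm hkp (by nlinarith)
    have hdvd1 : (k + 1) ∣ p := ⟨k + 2, h3⟩
    rcases hp.eq_one_or_self_of_dvd _ hdvd1 with h4 | h4
    · omega
    · rw [h4] at h3
      have h5 : p * 2 ≤ p * (k + 2) := Nat.mul_le_mul_left _ (by omega)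
      linarith
  have hq_ceil : q ≤ p ⌈/⌉ (k + 2) := by
    by_contra hcon
    push_neg at hcon
    have h6 : p ⌈/⌉ (k + 2) ≤ q - 1 := by omega
    have h7 : p ≤ (k + 2) * (q - 1) := (ceilDiv_le_iff_le_mul (by omega)).mp h6
    obtain ⟨a, ha⟩ : ∃ a, q = a + 1 := ⟨q - 1, by omega⟩
    rw [ha] at h7 hdm hqk
    rw [Nat.add_sub_cancel] at h7
    have e1 : (k + 1) * (a + 1) = (k + 1) * a + (k + 1) := by ring
    have e2 : (k + 2) * a = (k + 1) * a + a := by ring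
    have e3 : a ≤ k := by omega
    linarith
  -- CharP for power series
  haveI : CharP (PowerSeries (ZMod p)) p :=
    charP_of_injective_ringHom (PowerSeries.C_injective) p
  haveI : ExpChar (PowerSeries (ZMod p)) p := ExpChar.prime hp
  have hfrob : ((1 : PowerSeries (ZMod p)) - PowerSeries.X) ^ p = 1 - PowerSeries.X ^ p := by
    rw [sub_pow_char, one_pow]
  -- the witness polynomial
  set h₀ : MvPolynomial (Fin 2) (ZMod p) :=
    (MvPolynomial.X 1) ^ q - (1 - MvPolynomial.X 0) ^ r with hh₀
  have hne₀ : h₀ ≠ 0 := by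
    intro heq
    have h1 : MvPolynomial.eval (fun _ => (0 : ZMod p)) h₀ = 0 := by rw [heq, map_zero]
    rw [hh₀, map_sub, map_pow, map_pow, map_sub, map_one, MvPolynomial.eval_X,
      MvPolynomial.eval_X, sub_zero, one_pow, zero_pow (by omega), zero_sub] at h1
    exact one_ne_zero (neg_eq_zero.mp h1)
  have hdeg₀ : h₀.totalDegree ≤ max q r := by
    rw [hh₀]
    refine le_trans (MvPolynomial.totalDegree_sub _ _) (max_le_max ?_ ?_)
    · rw [MvPolynomial.totalDegree_X_pow]
    · refine le_trans (MvPolynomial.totalDegree_pow _ _) ?_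
      have : (1 - MvPolynomial.X 0 : MvPolynomial (Fin 2) (ZMod p)).totalDegree ≤ 1 := by
        refine le_trans (MvPolynomial.totalDegree_sub _ _) ?_
        rw [MvPolynomial.totalDegree_one]
        simp [MvPolynomial.totalDegree_X]
      calc r * (1 - MvPolynomial.X 0 : MvPolynomial (Fin 2) (ZMod p)).totalDegree
          ≤ r * 1 := Nat.mul_le_mul_left _ this
        _ = r := Nat.mul_one r
  have haeval : MvPolynomial.aeval ![(PowerSeries.X : PowerSeries (ZMod p)), PowerSeries.mk s] h₀
      = (PowerSeries.mk s) ^ q - (1 - PowerSeries.X) ^ r := by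
    rw [hh₀, map_sub, map_pow, map_pow, map_sub, map_one, MvPolynomial.aeval_X,
      MvPolynomial.aeval_X]
    simp
  have hkey : ((1 - PowerSeries.X : PowerSeries (ZMod p)) ^ (k + 1)) ^ q *
      ((PowerSeries.mk s) ^ q - (1 - PowerSeries.X) ^ r) = PowerSeries.X ^ p := by
    rw [mul_sub, ← mul_pow, hG, one_pow, ← pow_mul, ← pow_add, hdm, hfrob]
    ring
  have hdvd₀ : (PowerSeries.X : PowerSeries (ZMod p)) ^ p ∣
      MvPolynomial.aeval ![(PowerSeries.X : PowerSeries (ZMod p)), PowerSeries.mk s] h₀ := by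
    rw [haeval, ← (huA.pow q).dvd_mul_left, hkey]
  have hmem : h₀.totalDegree ∈ {d | ∃ h : MvPolynomial (Fin 2) (ZMod p), h ≠ 0 ∧
      h.totalDegree = d ∧ (PowerSeries.X : PowerSeries (ZMod p)) ^ p ∣
      MvPolynomial.aeval ![(PowerSeries.X : PowerSeries (ZMod p)), PowerSeries.mk s] h} :=
    ⟨h₀, hne₀, rfl, hdvd₀⟩
  -- lower bound for every member
  have hbound : ∀ d0 ∈ {d | ∃ h : MvPolynomial (Fin 2) (ZMod p), h ≠ 0 ∧
      h.totalDegree = d ∧ (PowerSeries.X : PowerSeries (ZMod p)) ^ p ∣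
      MvPolynomial.aeval ![(PowerSeries.X : PowerSeries (ZMod p)), PowerSeries.mk s] h},
      p ⌈/⌉ (k + 2) ≤ d0 := by
    rintro d0 ⟨h, hne, hdeq, hdvd⟩
    refine le_of_not_gt fun hlt => ?_
    have hxx : (k + 2) * d0 < p := by
      by_contra hc
      push_neg at hc
      exact absurd ((ceilDiv_le_iff_le_mul (by omega : (0:ℕ) < k + 2)).mpr hc) (not_le.mpr hlt)
    have hd0k : d0 ≤ k := by
      have h1 : (k + 2) * d0 < (k + 2) * (k + 1) := by nlinarith
      have := Nat.lt_of_mul_lt_mul_left h1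
      omega
    have hsup : ∀ m ∈ h.support, m 0 + m 1 ≤ d0 := by
      intro m hm
      have h1 := MvPolynomial.le_totalDegree hm
      rw [hdeq] at h1
      rwa [Finsupp.sum_fintype _ _ (fun i => rfl), Fin.sum_univ_two] at h1
    have hspec := clearPoly_spec k d0 (PowerSeries.mk s) hG h
      (fun m hm => le_trans (Nat.le_add_left _ _) (hsup m hm))
    have hdvd2 : (PowerSeries.X : PowerSeries (ZMod p)) ^ p ∣
        ((clearPoly k d0 h : Polynomial (ZMod p)) : PowerSeries (ZMod p)) := by
      rw [← hspec]
      exact hdvd.mul_left _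
    have hcz : ∀ n, n < p → (clearPoly k d0 h).coeff n = 0 := by
      intro n hn
      have h1 := PowerSeries.X_pow_dvd_iff.mp hdvd2 n hn
      rwa [Polynomial.coeff_coe] at h1
    have hPnd : (clearPoly k d0 h).natDegree ≤ (k + 2) * d0 := by
      rw [clearPoly]
      refine Polynomial.natDegree_sum_le_of_forall_le _ _ fun m hm => ?_
      have hmd := hsup m hm
      have hns : (1 - Polynomial.X : Polynomial (ZMod p)).natDegree = 1 := by
        have he : (1 - Polynomial.X : Polynomial (ZMod p))
            = -(Polynomial.X - Polynomial.C 1) := by rw [Polynomial.C_1]; ring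
        rw [he, Polynomial.natDegree_neg, Polynomial.natDegree_X_sub_C]
      calc (Polynomial.C (MvPolynomial.coeff m h) * Polynomial.X ^ (m 0) *
            ((1 - Polynomial.X) ^ (k + 1)) ^ (d0 - m 1)).natDegree
          ≤ (Polynomial.C (MvPolynomial.coeff m h) * Polynomial.X ^ (m 0)).natDegree +
            (((1 - Polynomial.X : Polynomial (ZMod p)) ^ (k + 1)) ^ (d0 - m 1)).natDegree :=
            Polynomial.natDegree_mul_le
        _ ≤ m 0 + (d0 - m 1) * (k + 1) := by
            refine Nat.add_le_add ?_ ?_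
            · refine le_trans Polynomial.natDegree_mul_le ?_
              rw [Polynomial.natDegree_C, Polynomial.natDegree_X_pow, Nat.zero_add]
            · refine le_trans (Polynomial.natDegree_pow_le) ?_
              refine Nat.mul_le_mul_left _ ?_
              refine le_trans (Polynomial.natDegree_pow_le) ?_
              rw [hns, Nat.mul_one]
        _ ≤ (d0 - m 1) + (d0 - m 1) * (k + 1) := by
            have : m 0 ≤ d0 - m 1 := by omega
            exact Nat.add_le_add_right this _
        _ = (d0 - m 1) * (k + 2) := by ring
        _ ≤ d0 * (k + 2) := Nat.mul_le_mul_right _ (Nat.sub_le _ _)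
        _ = (k + 2) * d0 := Nat.mul_comm _ _
    have hPne := clearPoly_ne_zero k d0 h hne hsup hd0k
    have hnd : (clearPoly k d0 h).natDegree < p := lt_of_le_of_lt hPnd hxx
    exact hPne (Polynomial.leadingCoeff_eq_zero.mp (hcz _ hnd))
  constructor
  · rw [expComplexityN, if_neg hguard]
    exact le_csInf ⟨h₀.totalDegree, hmem⟩ hbound
  · rw [expComplexityN, if_neg hguard]
    refine le_trans (Nat.sInf_le hmem) (le_trans hdeg₀ (max_le_max hq_ceil le_rfl))
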